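/- A generic compact subset of ℝ is visible: the set of K ∈ 𝒞(ℝ) for which there exists a translation-invariant Borel measure μ on ℝ with 0 < μ(K) < ∞ is comeager in 𝒞(ℝ). -/

import Mathlib

open Set MeasureTheory TopologicalSpace

/-- A (Borel) measure on `ℝ` is translation invariant if `μ(A + t) = μ(A)` for every
Borel set `A` and every `t : ℝ`. -/
def TransInvariant (μ : Measure ℝ) : Prop :=
  ∀ (t : ℝ) (A : Set ℝ), MeasurableSet A → μ ((fun x => x + t) '' A) = μ A

section Aux

open Function Metric

def Sidon (S : Set ℝ) : Prop :=
  ∀ a ∈ S, ∀ b ∈ S, ∀ c ∈ S, ∀ d ∈ S, a + b = c + d → a = c ∨ a = d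

lemma sidon_insert {S : Set ℝ} (hfin : S.Finite) (hS : Sidon S) (y : ℝ) {η : ℝ} (hη : 0 < η) :
    ∃ x : ℝ, |x - y| < η ∧ Sidon (insert x S) := by
  classical
  set T : Set ℝ := (S ∪ (fun p : ℝ × ℝ × ℝ => p.2.1 + p.2.2 - p.1) '' (S ×ˢ S ×ˢ S))
      ∪ (fun p : ℝ × ℝ => (p.1 + p.2) / 2) '' (S ×ˢ S) with hT
  have hTfin : T.Finite :=
    (hfin.union ((hfin.prod (hfin.prod hfin)).image _)).union ((hfin.prod hfin).image _)
  obtain ⟨x, hx⟩ := ((Set.Ioo_infinite (show y - η < y + η by linarith)).diff hTfin).nonempty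
  have hx1 := hx.1
  have hx2 := hx.2
  rw [mem_Ioo] at hx1
  have h2 : ∀ b ∈ S, ∀ c ∈ S, ∀ d ∈ S, x + b ≠ c + d := by
    intro b hb c hc d hd he
    exact hx2 (Or.inl (Or.inr ⟨(b, c, d), ⟨hb, hc, hd⟩, by dsimp; linarith⟩))
  have h3 : ∀ c ∈ S, ∀ d ∈ S, x + x ≠ c + d := by
    intro c hc d hd he
    exact hx2 (Or.inr ⟨(c, d), ⟨hc, hd⟩, by dsimp; linarith⟩)
  refine ⟨x, by rw [abs_sub_lt_iff]; constructor <;> linarith, ?_⟩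
  intro a ha b hb c hc d hd he
  rcases Set.mem_insert_iff.1 ha with hax | ha <;> rcases Set.mem_insert_iff.1 hb with hbx | hb <;>
    rcases Set.mem_insert_iff.1 hc with hcx | hc <;> rcases Set.mem_insert_iff.1 hd with hdx | hd
  all_goals first
    | exact Or.inl (by linarith)
    | exact Or.inr (by linarith)
    | exact ((h3 _ hc _ hd) (by linarith)).elim
    | exact ((h2 _ hb _ hc _ hd) (by linarith)).elim
    | exact ((h2 _ ha _ hc _ hd) (by linarith)).elim
    | exact ((h3 _ ha _ hb) (by linarith)).elim
    | exact ((h2 _ hd _ ha _ hb) (by linarith)).elim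
    | exact ((h2 _ hc _ ha _ hb) (by linarith)).elim
    | exact hS a ha b hb c hc d hd he

lemma sidon_approx (F : Finset ℝ) {η : ℝ} (hη : 0 < η) :
    ∃ G : Finset ℝ, Sidon (G : Set ℝ) ∧ (∀ y ∈ F, ∃ x ∈ G, |x - y| < η) ∧
      (∀ x ∈ G, ∃ y ∈ F, |x - y| < η) := by
  classical
  induction F using Finset.induction_on with
  | empty =>
      refine ⟨∅, ?_, by simp, by simp⟩
      intro a ha
      simp at ha
  | @insert a F' hnm ih =>
      obtain ⟨G, hG, h1, h2⟩ := ih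
      obtain ⟨x, hxy, hSid⟩ := sidon_insert G.finite_toSet hG a hη
      refine ⟨insert x G, by simpa using hSid, ?_, ?_⟩
      · intro y hy
        rcases Finset.mem_insert.1 hy with rfl | hy
        · exact ⟨x, Finset.mem_insert_self _ _, hxy⟩
        · obtain ⟨x', hx', h⟩ := h1 y hy
          exact ⟨x', Finset.mem_insert_of_mem hx', h⟩
      · intro z hz
        rcases Finset.mem_insert.1 hz with rfl | hz
        · exact ⟨a, Finset.mem_insert_self _ _, hxy⟩
        · obtain ⟨y, hy, h⟩ := h2 z hz
          exact ⟨y, Finset.mem_insert_of_mem hy, h⟩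

lemma sidon_gap (G : Finset ℝ) :
    ∃ m : ℝ, 0 < m ∧ ∀ p ∈ G, ∀ q ∈ G, ∀ r ∈ G, ∀ s ∈ G,
      p + q ≠ r + s → m ≤ |p + q - (r + s)| := by
  classical
  set V : Set ℝ := {v | 0 < v ∧ ∃ p ∈ G, ∃ q ∈ G, ∃ r ∈ G, ∃ s ∈ G, v = |p + q - (r + s)|}
    with hV
  have hVfin : V.Finite := by
    apply Set.Finite.subset (((G.finite_toSet.prod G.finite_toSet).prod
      (G.finite_toSet.prod G.finite_toSet)).image
        (fun p : (ℝ × ℝ) × ℝ × ℝ => |p.1.1 + p.1.2 - (p.2.1 + p.2.2)|))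
    rintro v ⟨hv, p, hp, q, hq, r, hr, s, hs, rfl⟩
    exact ⟨((p, q), (r, s)), ⟨⟨hp, hq⟩, hr, hs⟩, rfl⟩
  have hWfin : (insert (1 : ℝ) V).Finite := hVfin.insert 1
  obtain ⟨m, hmW, hmin⟩ := Set.exists_min_image _ id hWfin ⟨1, mem_insert _ _⟩
  refine ⟨m, ?_, ?_⟩
  · rcases mem_insert_iff.1 hmW with rfl | hm
    · norm_num
    · exact hm.1
  · intro p hp q hq r hr s hs hne
    have hpos : 0 < |p + q - (r + s)| := abs_pos.2 (sub_ne_zero.2 hne)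
    exact hmin _ (mem_insert_of_mem _ ⟨hpos, p, hp, q, hq, r, hr, s, hs, rfl⟩)

lemma nc_edist_ne_top (L M : NonemptyCompacts ℝ) :
    EMetric.hausdorffEdist (L : Set ℝ) (M : Set ℝ) ≠ ⊤ :=
  hausdorffEdist_ne_top_of_nonempty_of_bounded L.nonempty M.nonempty
    L.isCompact.isBounded M.isCompact.isBounded

lemma nc_transfer {L M : NonemptyCompacts ℝ} {r : ℝ} (h : dist L M < r) {x : ℝ}
    (hx : x ∈ (L : Set ℝ)) : ∃ y ∈ (M : Set ℝ), dist x y < r :=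
  exists_dist_lt_of_hausdorffDist_lt hx (by rwa [NonemptyCompacts.dist_eq] at h)
    (nc_edist_ne_top L M)

lemma nc_dist_le {L M : NonemptyCompacts ℝ} {r : ℝ} (hr : 0 ≤ r)
    (h1 : ∀ x ∈ (L : Set ℝ), ∃ y ∈ (M : Set ℝ), dist x y ≤ r)
    (h2 : ∀ y ∈ (M : Set ℝ), ∃ x ∈ (L : Set ℝ), dist y x ≤ r) : dist L M ≤ r := by
  rw [NonemptyCompacts.dist_eq]
  exact hausdorffDist_le_of_mem_dist hr h1 h2

lemma nwd_of_balls {X : Type*} [MetricSpace X] {s : Set X}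
    (h : ∀ x : X, ∀ ε : ℝ, 0 < ε → ∃ y : X, ∃ δ : ℝ, 0 < δ ∧ dist y x < ε ∧
      ∀ z ∈ s, δ ≤ dist y z) : IsNowhereDense s := by
  rw [IsNowhereDense, interior_eq_empty_iff_dense_compl, Metric.dense_iff]
  intro x r hr
  obtain ⟨y, δ, hδ, hyx, hsep⟩ := h x r hr
  refine ⟨y, mem_ball.2 hyx, fun hy => ?_⟩
  obtain ⟨b, hb, hby⟩ := Metric.mem_closure_iff.1 hy δ hδ
  exact absurd (hsep b hb) (not_le.2 hby)

def B1 (n : ℕ) : Set (NonemptyCompacts ℝ) :=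
  {K | ∃ x ∈ (K : Set ℝ), ∀ y ∈ (K : Set ℝ), y ≠ x → 1 / (n + 1 : ℝ) ≤ |y - x|}

def B2 (n : ℕ) : Set (NonemptyCompacts ℝ) :=
  {K | ∃ a ∈ (K : Set ℝ), ∃ b ∈ (K : Set ℝ), ∃ c ∈ (K : Set ℝ), ∃ d ∈ (K : Set ℝ),
    a + b = c + d ∧ 1 / (n + 1 : ℝ) ≤ |a - c| ∧ 1 / (n + 1 : ℝ) ≤ |a - d|}

lemma nwdB1 (n : ℕ) : IsNowhereDense (B1 n) := by
  have hρ : 0 < 1 / (n + 1 : ℝ) := by positivity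
  set ρ : ℝ := 1 / (n + 1 : ℝ)
  apply nwd_of_balls
  intro K ε hε
  set r : ℝ := min (ε / 2) 1 with hrdef
  have hr0 : 0 < r := lt_min (by linarith) one_pos
  have hcomp : IsCompact (cthickening r (K : Set ℝ)) := K.isCompact.cthickening
  have hKsub : (K : Set ℝ) ⊆ cthickening r (K : Set ℝ) := self_subset_cthickening _
  set K' : NonemptyCompacts ℝ :=
    ⟨⟨cthickening r (K : Set ℝ), hcomp⟩, K.nonempty.mono hKsub⟩ with hK'def
  have hK'coe : (K' : Set ℝ) = cthickening r (K : Set ℝ) := rfl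
  have hmem_th : ∀ y ∈ (K' : Set ℝ), ∃ z ∈ (K : Set ℝ), dist y z ≤ r := by
    intro y hy
    rw [hK'coe, K.isCompact.cthickening_eq_biUnion_closedBall hr0.le] at hy
    obtain ⟨z, hz, hyz⟩ := mem_iUnion₂.1 hy
    exact ⟨z, hz, hyz⟩
  have hdist : dist K' K < ε := by
    have : dist K' K ≤ r := by
      apply nc_dist_le hr0.le hmem_th
      intro y hy
      exact ⟨y, hKsub hy, by simp [hr0.le]⟩
    calc dist K' K ≤ r := this
      _ ≤ ε / 2 := min_le_left _ _
      _ < ε := by linarith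
  set δ : ℝ := min (r / 3) (ρ / 6) with hδdef
  have hδ0 : 0 < δ := lt_min (by linarith) (by linarith)
  have hδr : 3 * δ ≤ r := by
    have := min_le_left (r / 3) (ρ / 6); linarith
  have hδρ : 6 * δ ≤ ρ := by
    have := min_le_right (r / 3) (ρ / 6); linarith
  refine ⟨K', δ, hδ0, hdist, ?_⟩
  intro L hL
  by_contra hcon
  push_neg at hcon
  obtain ⟨x, hxL, hiso⟩ := hL
  obtain ⟨y, hyK', hxy⟩ := nc_transfer (by rwa [dist_comm] at hcon) hxL
  obtain ⟨z, hzK, hyz⟩ := hmem_th y hyK'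
  set y' : ℝ := if y ≤ z then y + 3 * δ else y - 3 * δ with hy'def
  have hy'y : |y' - y| = 3 * δ := by
    rw [hy'def]
    split_ifs <;> simp [abs_of_nonneg, abs_of_nonpos, hδ0.le] <;> linarith
  have hy'K' : y' ∈ (K' : Set ℝ) := by
    rw [hK'coe]
    apply mem_cthickening_of_dist_le y' z r _ hzK
    rw [Real.dist_eq]
    rw [Real.dist_eq] at hyz
    rw [hy'def]
    rcases abs_le.1 hyz with ⟨hl, hu⟩
    split_ifs with hcase
    · rw [abs_le]; constructor <;> linarith
    · rw [abs_le]; constructor <;> linarith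
  obtain ⟨x'', hx''L, hx''⟩ := nc_transfer hcon hy'K'
  rw [Real.dist_eq] at hxy hx''
  have hne : x'' ≠ x := by
    rintro rfl
    have h1 : |y' - y| ≤ |y' - x''| + |x'' - y| := by
      have := abs_add_le (y' - x'') (x'' - y)
      simpa using this
    rw [hy'y] at h1
    linarith
  have hfar := hiso x'' hx''L hne
  have hclose : |x'' - x| < 5 * δ := by
    have h1 : |x'' - x| ≤ |x'' - y'| + |y' - y| + |y - x| := by
      have ha := abs_add_le (x'' - y') (y' - x)
      have hb := abs_add_le (y' - y) (y - x)
      have : x'' - x = (x'' - y') + (y' - x) := by ring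
      rw [this]
      calc |(x'' - y') + (y' - x)| ≤ |x'' - y'| + |y' - x| := abs_add_le _ _
        _ ≤ |x'' - y'| + (|y' - y| + |y - x|) := by
            have : y' - x = (y' - y) + (y - x) := by ring
            rw [this]
            exact add_le_add_right (abs_add_le _ _) _
        _ = |x'' - y'| + |y' - y| + |y - x| := by ring
    rw [hy'y, abs_sub_comm x'' y'] at h1
    rw [abs_sub_comm x y] at hxy
    linarith
  linarith [hclose, hfar, hδρ, hδ0]

lemma nwdB2 (n : ℕ) : IsNowhereDense (B2 n) := by
  have hρ : 0 < 1 / (n + 1 : ℝ) := by positivity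
  set ρ : ℝ := 1 / (n + 1 : ℝ)
  apply nwd_of_balls
  intro K ε hε
  have hε4 : 0 < ε / 4 := by linarith
  obtain ⟨t, htsub, htfin, htcover⟩ := finite_cover_balls_of_compact K.isCompact hε4
  obtain ⟨G, hG, h1, h2⟩ := sidon_approx htfin.toFinset hε4
  have hGne : G.Nonempty := by
    obtain ⟨p, hp⟩ := K.nonempty
    obtain ⟨y, hy⟩ := mem_iUnion₂.1 (htcover hp)
    obtain ⟨x', hx', _⟩ := h1 y (htfin.mem_toFinset.2 hy.1)
    exact ⟨x', hx'⟩
  set K' : NonemptyCompacts ℝ := ⟨⟨(G : Set ℝ), G.finite_toSet.isCompact⟩,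
    by simpa using hGne⟩ with hK'def
  have hK'coe : (K' : Set ℝ) = (G : Set ℝ) := rfl
  have hdist : dist K' K < ε := by
    have : dist K' K ≤ ε / 2 := by
      apply nc_dist_le (by linarith)
      · intro x hx
        rw [hK'coe] at hx
        obtain ⟨y, hy, hxy⟩ := h2 x hx
        refine ⟨y, htsub (htfin.mem_toFinset.1 hy), ?_⟩
        rw [Real.dist_eq]
        linarith
      · intro z hz
        obtain ⟨y, hy⟩ := mem_iUnion₂.1 (htcover hz)
        obtain ⟨x', hx', hx'y⟩ := h1 y (htfin.mem_toFinset.2 hy.1)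
        refine ⟨x', hx', ?_⟩
        have hzy : dist z y < ε / 4 := mem_ball.1 hy.2
        calc dist z x' ≤ dist z y + dist y x' := dist_triangle _ _ _
          _ ≤ ε / 4 + ε / 4 := by
              simp only [Real.dist_eq] at hzy ⊢
              rw [abs_sub_comm y x']
              exact add_le_add hzy.le hx'y.le
          _ = ε / 2 := by ring
    linarith
  obtain ⟨m, hm0, hmin⟩ := sidon_gap G
  set δ : ℝ := min (ρ / 4) (m / 8) with hδdef
  have hδ0 : 0 < δ := lt_min (by linarith) (by linarith)
  have hδρ : 4 * δ ≤ ρ := by have := min_le_left (ρ / 4) (m / 8); linarith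
  have hδm : 8 * δ ≤ m := by have := min_le_right (ρ / 4) (m / 8); linarith
  refine ⟨K', δ, hδ0, hdist, ?_⟩
  intro L hL
  by_contra hcon
  push_neg at hcon
  obtain ⟨a, ha, b, hb, c, hc, d, hd, he, hac, had⟩ := hL
  have trans : ∀ w ∈ (L : Set ℝ), ∃ w' ∈ G, |w - w'| < δ := by
    intro w hw
    obtain ⟨w', hw', h⟩ := nc_transfer (by rwa [dist_comm] at hcon) hw
    rw [hK'coe] at hw'
    rw [Real.dist_eq] at h
    exact ⟨w', hw', h⟩
  obtain ⟨a', ha', hda⟩ := trans a ha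
  obtain ⟨b', hb', hdb⟩ := trans b hb
  obtain ⟨c', hc', hdc⟩ := trans c hc
  obtain ⟨d', hd', hdd⟩ := trans d hd
  have habs : |a' + b' - (c' + d')| < 4 * δ := by
    rcases abs_lt.1 hda with ⟨h1, h2⟩
    rcases abs_lt.1 hdb with ⟨h3, h4⟩
    rcases abs_lt.1 hdc with ⟨h5, h6⟩
    rcases abs_lt.1 hdd with ⟨h7, h8⟩
    rw [abs_lt]
    constructor <;> linarith
  have heq : a' + b' = c' + d' := by
    by_contra hne
    have := hmin a' ha' b' hb' c' hc' d' hd' hne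
    linarith
  rcases hG a' ha' b' hb' c' hc' d' hd' heq with h | h
  · subst h
    rcases abs_lt.1 hda with ⟨h1, h2⟩
    rcases abs_lt.1 hdc with ⟨h5, h6⟩
    have hlt : |a - c| < ρ := by rw [abs_lt]; constructor <;> linarith
    linarith
  · subst h
    rcases abs_lt.1 hda with ⟨h1, h2⟩
    rcases abs_lt.1 hdd with ⟨h7, h8⟩
    have hlt : |a - d| < ρ := by rw [abs_lt]; constructor <;> linarith
    linarith

lemma cantor_nebot : (nhdsWithin (0 : ℕ → ZMod 2) {(0 : ℕ → ZMod 2)}ᶜ).NeBot := by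
  rw [← mem_closure_iff_nhdsWithin_neBot]
  have : Filter.Tendsto (fun n : ℕ => (fun i => if i = n then 1 else 0 : ℕ → ZMod 2))
      Filter.atTop (nhds 0) := by
    rw [tendsto_pi_nhds]
    intro i
    apply Filter.Tendsto.congr' (f₁ := fun _ => (0 : ZMod 2))
    · filter_upwards [Filter.eventually_gt_atTop i] with n hn
      simp [Ne.symm (ne_of_gt hn)]
    · exact tendsto_const_nhds
  apply mem_closure_of_tendsto this
  filter_upwards with n
  intro h
  have := congrFun h n
  simp at this

lemma exists_nu (K : Set ℝ) (hK : Perfect K) (hne : K.Nonempty) :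
    ∃ ν : Measure ℝ, ν K = 1 ∧ ∀ A : Set ℝ, MeasurableSet A → (A ∩ K).Subsingleton → ν A = 0 := by
  obtain ⟨f, hfK, hfc, hfi⟩ := hK.exists_nat_bool_injection hne
  let φ : (ℕ → ZMod 2) → (ℕ → Bool) := fun g n => finTwoEquiv (g n)
  have hφc : Continuous φ :=
    continuous_pi fun n => (continuous_of_discreteTopology).comp (continuous_apply n)
  have hφi : Injective φ := fun g h hgh => funext fun n => finTwoEquiv.injective (congrFun hgh n)
  let g : (ℕ → ZMod 2) → ℝ := f ∘ φ
  have hgc : Continuous g := hfc.comp hφc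
  have hgi : Injective g := hfi.comp hφi
  have hgK : range g ⊆ K := by
    intro x ⟨y, hy⟩; exact hfK ⟨φ y, hy⟩
  haveI : (nhdsWithin (0 : ℕ → ZMod 2) {(0 : ℕ → ZMod 2)}ᶜ).NeBot := cantor_nebot
  haveI : WeaklyLocallyCompactSpace (ℕ → ZMod 2) := inferInstance
  let μ0 : Measure (ℕ → ZMod 2) := Measure.addHaarMeasure ⊤
  haveI : μ0.IsAddHaarMeasure := Measure.isAddHaarMeasure_addHaarMeasure ⊤
  haveI : NoAtoms μ0 := Measure.IsAddHaarMeasure.nullSingletonClass μ0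
  refine ⟨Measure.map g μ0, ?_, ?_⟩
  · rw [Measure.map_apply hgc.measurable (hK.closed.measurableSet)]
    have : g ⁻¹' K = univ := eq_univ_of_forall fun y => hgK (mem_range_self y)
    rw [this]
    have := Measure.addHaarMeasure_self (K₀ := (⊤ : PositiveCompacts (ℕ → ZMod 2)))
    simpa using this
  · intro A hA hsub
    rw [Measure.map_apply hgc.measurable hA]
    have h1 : g ⁻¹' A = g ⁻¹' (A ∩ K) := by
      ext x; simp only [mem_preimage, mem_inter_iff]
      exact ⟨fun h => ⟨h, hgK (mem_range_self x)⟩, fun h => h.1⟩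
    rw [h1]
    exact (hsub.preimage hgi).measure_zero μ0

lemma main_measure (K : Set ℝ) (hKc : IsClosed K)
    (ν : Measure ℝ) (hν1 : ν K = 1)
    (hν0 : ∀ A : Set ℝ, MeasurableSet A → (A ∩ K).Subsingleton → ν A = 0)
    (hQ : ∀ a ∈ K, ∀ b ∈ K, ∀ c ∈ K, ∀ d ∈ K, a + b = c + d → a = c ∨ a = d) :
    ∃ μ : Measure ℝ, TransInvariant μ ∧ 0 < μ K ∧ μ K < ⊤ := by
  set μ : Measure ℝ := Measure.sum (fun t : ℝ => Measure.map (· + t) ν) with hμ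
  have happ : ∀ A : Set ℝ, MeasurableSet A → μ A = ∑' t : ℝ, ν ((· + t) ⁻¹' A) := by
    intro A hA
    rw [hμ, Measure.sum_apply _ hA]
    congr 1
    ext t
    rw [Measure.map_apply (measurable_add_const t) hA]
  have hKm : MeasurableSet K := hKc.measurableSet
  have hμK : μ K = 1 := by
    rw [happ K hKm]
    rw [tsum_eq_single 0 ?_]
    · simpa using hν1
    · intro t ht
      apply hν0 _ ((measurable_add_const t) hKm)
      intro x hx y hy
      rcases hQ x hx.2 (y + t) hy.1 y hy.2 (x + t) hx.1 (by ring) with h | h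
      · exact h
      · exact absurd (by linarith [h]) ht
  refine ⟨μ, ?_, by rw [hμK]; norm_num, by rw [hμK]; norm_num⟩
  intro t A hA
  have hS : (fun x => x + t) '' A = (fun x => x + -t) ⁻¹' A := by
    ext x
    simp only [mem_image, mem_preimage]
    constructor
    · rintro ⟨y, hy, rfl⟩; simpa using hy
    · intro h; exact ⟨x + -t, h, by ring⟩
  have hSm : MeasurableSet ((fun x => x + t) '' A) := by
    rw [hS]; exact (measurable_add_const (-t)) hA
  rw [happ _ hSm, happ _ hA]
  have hterm : ∀ s : ℝ, (fun x => x + s) ⁻¹' ((fun x => x + t) '' A)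
      = (fun x => x + (s - t)) ⁻¹' A := by
    intro s
    rw [hS]
    ext x
    simp only [mem_preimage]
    have : x + s + -t = x + (s - t) := by ring
    rw [this]
  simp_rw [hterm]
  exact Equiv.tsum_eq (Equiv.subRight t) (fun s => ν ((fun x => x + s) ⁻¹' A))

lemma meagre_of_nwd {X : Type*} [TopologicalSpace X] {s : Set X} (h : IsNowhereDense s) :
    IsMeagre s := by
  rw [isMeagre_iff_countable_union_isNowhereDense]
  exact ⟨{s}, by simpa, countable_singleton _, by simp⟩

end Aux

/-- A generic compact subset of `ℝ` is visible: the set of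
`K ∈ 𝒞(ℝ)` admitting a translation-invariant Borel measure `μ` with `0 < μ(K) < ∞`
is comeager in `𝒞(ℝ)`. -/
theorem stmt_11 :
    {K : NonemptyCompacts ℝ |
        ∃ μ : Measure ℝ, TransInvariant μ ∧ 0 < μ (K : Set ℝ) ∧ μ (K : Set ℝ) < ⊤} ∈
      residual (NonemptyCompacts ℝ) := by
  have hM : IsMeagre ((⋃ n, B1 n) ∪ ⋃ n, B2 n) := by
    rw [IsMeagre, Set.compl_union]
    exact Filter.inter_mem
      (by rw [← IsMeagre]; exact isMeagre_iUnion fun n => meagre_of_nwd (nwdB1 n))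
      (by rw [← IsMeagre]; exact isMeagre_iUnion fun n => meagre_of_nwd (nwdB2 n))
  apply Filter.mem_of_superset hM
  intro K hK
  simp only [Set.compl_union, Set.mem_inter_iff, Set.mem_compl_iff, Set.mem_iUnion,
    not_exists] at hK
  obtain ⟨hK1, hK2⟩ := hK
  have hperf : Perfect (K : Set ℝ) := by
    constructor
    · exact K.isCompact.isClosed
    · intro x hx
      rw [accPt_iff_nhds]
      intro U hU
      by_contra hcon
      push_neg at hcon
      obtain ⟨ε, hε, hball⟩ := Metric.mem_nhds_iff.1 hU
      obtain ⟨n, hn⟩ := exists_nat_one_div_lt hε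
      apply hK1 n
      refine ⟨x, hx, fun y hy hyx => ?_⟩
      by_contra hlt
      push_neg at hlt
      have hyb : y ∈ Metric.ball x ε := by
        rw [Metric.mem_ball, Real.dist_eq]
        linarith
      exact hyx (hcon y ⟨hball hyb, hy⟩)
  have hquad : ∀ a ∈ (K : Set ℝ), ∀ b ∈ (K : Set ℝ), ∀ c ∈ (K : Set ℝ), ∀ d ∈ (K : Set ℝ),
      a + b = c + d → a = c ∨ a = d := by
    intro a ha b hb c hc d hd he
    by_contra hcon
    push_neg at hcon
    have h1 : 0 < |a - c| := abs_pos.2 (sub_ne_zero.2 hcon.1)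
    have h2 : 0 < |a - d| := abs_pos.2 (sub_ne_zero.2 hcon.2)
    have hmin : 0 < min |a - c| |a - d| := lt_min h1 h2
    obtain ⟨n, hn⟩ := exists_nat_one_div_lt hmin
    exact hK2 n ⟨a, ha, b, hb, c, hc, d, hd, he,
      hn.le.trans (min_le_left _ _), hn.le.trans (min_le_right _ _)⟩
  obtain ⟨ν, hν1, hν0⟩ := exists_nu (K : Set ℝ) hperf K.nonempty
  exact main_measure (K : Set ℝ) K.isCompact.isClosed ν hν1 hν0 hquad
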